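/- Suppose a linear inequality v_0·α_0(A) + ... + v_n·α_n(A) ≤ s holds for all geometric-line-free sets A ⊆ [3]^n, where α_i(A) = |A ∩ S_{n-i,n}| / (C(n,i)·2^{n-i}). Then for all integers q ≥ 1, r ≥ 0, N ≥ nq + r and every geometric-line-free set A ⊆ [3]^N, one has v_0·α_{r}(A) + v_1·α_{q+r}(A) + ... + v_n·α_{nq+r}(A) ≤ s, where now α_j(A) = |A ∩ S_{N-j,N}| / (C(N,j)·2^{N-j}). -/

import Mathlib

/-- The cube \`[3]^n = {1,2,3}^n\`, viewed inside \`ℤ^n\`. -/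
def cube (n : ℕ) : Finset (Fin n → ℤ) :=
  Fintype.piFinset fun _ => ({1, 2, 3} : Finset ℤ)

/-- A Moser set: a set containing no geometric line \`{a, a+r, a+2r}\` with \`r ≠ 0\`. -/
def MoserFree {n : ℕ} (A : Finset (Fin n → ℤ)) : Prop :=
  ¬ ∃ a r : Fin n → ℤ, r ≠ 0 ∧ a ∈ A ∧ a + r ∈ A ∧ a + r + r ∈ A

/-- The density \`α_j(A)\`: the fraction of the set of words of \`[3]^n\` with exactly \`j\`
coordinates equal to 2 (a set of size \`C(n,j)·2^(n-j)\`) that belongs to \`A\`. -/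
noncomputable def density (n : ℕ) (A : Finset (Fin n → ℤ)) (j : ℕ) : ℝ :=
  ((A.filter fun x => (Finset.univ.filter fun t => x t = (2 : ℤ)).card = j).card : ℝ) /
    ((n.choose j : ℝ) * 2 ^ (n - j))

namespace Propg

abbrev Code (n : ℕ) := (Fin n × Bool) ⊕ Option Bool

variable {n N : ℕ}

def idx : Code n → Option (Fin n)
  | .inl (j, _) => some j
  | .inr _ => none

def applyCode (u : Code n) (x : Fin n → ℤ) : ℤ :=
  match u with
  | .inl (j, b) => if b then x j else 4 - x j
  | .inr none => 2
  | .inr (some b) => if b then 1 else 3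

def emb (a : Fin N → Code n) (x : Fin n → ℤ) : Fin N → ℤ := fun c => applyCode (a c) x

def reflCode : Code n → Code n
  | .inl (j, b) => .inl (j, !b)
  | .inr none => .inr none
  | .inr (some b) => .inr (some !b)

def act (π : Equiv.Perm (Fin N)) (t : Fin N → Bool) (a : Fin N → Code n) : Fin N → Code n :=
  fun c => if t c then reflCode (a (π.symm c)) else a (π.symm c)

def actPt (π : Equiv.Perm (Fin N)) (t : Fin N → Bool) (z : Fin N → ℤ) : Fin N → ℤ :=
  fun c => if t c then 4 - z (π.symm c) else z (π.symm c)

def Emb (n N q r : ℕ) : Finset (Fin N → Code n) :=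
  Finset.univ.filter fun a =>
    (∀ j : Fin n, (Finset.univ.filter fun c => idx (a c) = some j).card = q) ∧
    (Finset.univ.filter fun c => a c = .inr none).card = r

def twosCard {m : ℕ} (x : Fin m → ℤ) : ℕ := (Finset.univ.filter fun t => x t = (2 : ℤ)).card

lemma applyCode_refl (u : Code n) (x : Fin n → ℤ) :
    applyCode (reflCode u) x = 4 - applyCode u x := by
  rcases u with ⟨j, b⟩ | (_ | b)
  · cases b <;> simp [applyCode, reflCode] <;> ring
  · simp [applyCode, reflCode]
  · cases b <;> norm_num [applyCode, reflCode]

lemma idx_refl (u : Code n) : idx (reflCode u) = idx u := by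
  rcases u with ⟨j, b⟩ | (_ | b) <;> rfl

lemma refl_eq_inr_none {u : Code n} : reflCode u = .inr none ↔ u = .inr none := by
  rcases u with ⟨j, b⟩ | (_ | b) <;> simp [reflCode]

lemma applyCode_eq_two_iff (u : Code n) (x : Fin n → ℤ) :
    applyCode u x = 2 ↔ (∃ j, idx u = some j ∧ x j = 2) ∨ u = .inr none := by
  rcases u with ⟨j, b⟩ | (_ | b)
  · cases b <;> simp [applyCode, idx] <;> omega
  · simp [applyCode, idx]
  · cases b <;> simp [applyCode, idx]

lemma emb_mem_cube {a : Fin N → Code n} {x : Fin n → ℤ} (hx : x ∈ cube n) :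
    emb a x ∈ cube N := by
  simp only [cube, Fintype.mem_piFinset] at hx ⊢
  intro c
  rcases hu : a c with ⟨j, b⟩ | (_ | b)
  · have := hx j
    cases b <;> simp only [emb, applyCode, hu, Finset.mem_insert, Finset.mem_singleton] at * <;>
      omega
  · simp [emb, applyCode, hu]
  · cases b <;> simp [emb, applyCode, hu]

lemma card_filter_perm (π : Equiv.Perm (Fin N)) (P : Fin N → Prop) [DecidablePred P] :
    (Finset.univ.filter fun c => P (π.symm c)).card = (Finset.univ.filter P).card := by
  apply Finset.card_bij (fun c _ => π.symm c)
  · intro c hc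
    simpa using (Finset.mem_filter.mp hc).2
  · intro c₁ _ c₂ _ h
    exact π.symm.injective h
  · intro c hc
    exact ⟨π c, by simpa using (Finset.mem_filter.mp hc).2, by simp⟩

lemma twosCard_emb {a : Fin N → Code n} {q r : ℕ} (ha : a ∈ Emb n N q r) (x : Fin n → ℤ) :
    twosCard (emb a x) = q * twosCard x + r := by
  simp only [Emb, Finset.mem_filter] at ha
  obtain ⟨-, hfib, hR⟩ := ha
  have hsplit : (Finset.univ.filter fun c => emb a x c = 2) =
      (Finset.univ.filter fun c => ∃ j, idx (a c) = some j ∧ x j = 2) ∪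
      (Finset.univ.filter fun c => a c = .inr none) := by
    rw [← Finset.filter_or]
    apply Finset.filter_congr
    intro c _
    exact applyCode_eq_two_iff (a c) x
  have hdisj : Disjoint (Finset.univ.filter fun c => ∃ j, idx (a c) = some j ∧ x j = 2)
      (Finset.univ.filter fun c => a c = .inr none) := by
    rw [Finset.disjoint_left]
    intro c hc hc'
    simp only [Finset.mem_filter] at hc hc'
    obtain ⟨-, j, hj, -⟩ := hc
    rw [hc'.2] at hj
    simp [idx] at hj
  have hS : (Finset.univ.filter fun c => ∃ j, idx (a c) = some j ∧ x j = 2).card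
      = q * twosCard x := by
    rw [Finset.card_eq_sum_card_fiberwise
      (f := fun c => idx (a c))
      (t := (Finset.univ.filter fun j => x j = 2).image some)]
    · rw [Finset.sum_image (by simp)]
      have key : ∀ j ∈ (Finset.univ.filter fun j => x j = 2),
          (((Finset.univ.filter fun c => ∃ j', idx (a c) = some j' ∧ x j' = 2)).filter
            (fun c => idx (a c) = some j)).card = q := by
        intro j hj
        simp only [Finset.mem_filter] at hj
        rw [← hfib j]
        congr 1
        rw [Finset.filter_filter]
        apply Finset.filter_congr
        intro c _
        constructor
        · rintro ⟨⟨j', hj', -⟩, h2⟩; exact h2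
        · intro h2; exact ⟨⟨j, h2, hj.2⟩, h2⟩
      rw [Finset.sum_congr rfl key, Finset.sum_const, smul_eq_mul, twosCard, mul_comm]
    · intro c hc
      simp only [Finset.mem_coe, Finset.mem_filter] at hc
      obtain ⟨-, j, hj, hxj⟩ := hc
      exact Finset.mem_image.mpr ⟨j, by simp [hxj], hj.symm⟩
  rw [twosCard] at *
  have : (Finset.univ.filter fun c => emb a x c = 2).card = q * twosCard x + r := by
    rw [hsplit, Finset.card_union_of_disjoint hdisj, hS, hR, twosCard]
  simpa [twosCard] using this

lemma emb_act (π : Equiv.Perm (Fin N)) (t : Fin N → Bool) (a : Fin N → Code n)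
    (x : Fin n → ℤ) : emb (act π t a) x = actPt π t (emb a x) := by
  funext c
  simp only [emb, act, actPt]
  by_cases ht : t c <;> simp [ht, applyCode_refl]

lemma act_act_symm (π : Equiv.Perm (Fin N)) (t : Fin N → Bool) (a : Fin N → Code n) :
    act π t (act π.symm (fun c => t (π c)) a) = a := by
  funext c
  simp only [act, Equiv.symm_symm, Equiv.apply_symm_apply]
  by_cases ht : t c <;> simp [ht]
  rcases a c with ⟨j, b⟩ | (_ | b) <;> simp [reflCode]

lemma act_symm_act (π : Equiv.Perm (Fin N)) (t : Fin N → Bool) (a : Fin N → Code n) :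
    act π.symm (fun c => t (π c)) (act π t a) = a := by
  funext c
  simp only [act, Equiv.symm_symm, Equiv.apply_symm_apply, Equiv.symm_apply_apply]
  by_cases ht : t (π c) <;> simp [ht]
  rcases a c with ⟨j, b⟩ | (_ | b) <;> simp [reflCode]

lemma actPt_inj (π : Equiv.Perm (Fin N)) (t : Fin N → Bool) {z w : Fin N → ℤ}
    (h : actPt π t z = actPt π t w) : z = w := by
  funext c
  have := congrFun h (π c)
  simp only [actPt, Equiv.symm_apply_apply] at this
  by_cases ht : t (π c) <;> simp [ht] at this <;> omega

lemma act_mem_Emb {q r : ℕ} (π : Equiv.Perm (Fin N)) (t : Fin N → Bool)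
    {a : Fin N → Code n} (ha : a ∈ Emb n N q r) : act π t a ∈ Emb n N q r := by
  simp only [Emb, Finset.mem_filter, Finset.mem_univ, true_and] at ha ⊢
  obtain ⟨hfib, hR⟩ := ha
  constructor
  · intro j
    rw [← hfib j, ← card_filter_perm π (fun c => idx (a c) = some j)]
    congr 1
    apply Finset.filter_congr
    intro c _
    simp only [act]
    by_cases ht : t c <;> simp [ht, idx_refl]
  · rw [← hR, ← card_filter_perm π (fun c => a c = .inr none)]
    congr 1
    apply Finset.filter_congr
    intro c _
    simp only [act]
    by_cases ht : t c <;> simp [ht, refl_eq_inr_none]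

lemma exists_actPt {y y' : Fin N → ℤ} (hy : y ∈ cube N) (hy' : y' ∈ cube N)
    (hcard : twosCard y = twosCard y') :
    ∃ (π : Equiv.Perm (Fin N)) (t : Fin N → Bool), actPt π t y = y' := by
  have hc1 : Fintype.card {c // y c = 2} = Fintype.card {c // y' c = 2} := by
    rw [Fintype.card_subtype, Fintype.card_subtype]; exact hcard
  have hc2 : Fintype.card {c // ¬ y c = 2} = Fintype.card {c // ¬ y' c = 2} := by
    rw [Fintype.card_subtype_compl, Fintype.card_subtype_compl, hc1]
  let e := Fintype.equivOfCardEq hc1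
  let f := Fintype.equivOfCardEq hc2
  let π := Equiv.subtypeCongr e f
  have hπ : ∀ c, y c = 2 ↔ y' (π c) = 2 := by
    intro c
    by_cases hc : y c = 2
    · have h1 : (Equiv.sumCompl (fun x => y x = 2)).symm c = Sum.inl ⟨c, hc⟩ :=
        Equiv.sumCompl_symm_apply_of_pos (p := fun x => y x = 2) hc
      simp only [π, Equiv.subtypeCongr, Equiv.trans_apply, h1, Equiv.sumCongr_apply,
        Sum.map_inl, Equiv.sumCompl_apply_inl]
      exact ⟨fun _ => (e ⟨c, hc⟩).2, fun _ => hc⟩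
    · have h1 : (Equiv.sumCompl (fun x => y x = 2)).symm c = Sum.inr ⟨c, hc⟩ :=
        Equiv.sumCompl_symm_apply_of_neg (p := fun x => y x = 2) hc
      simp only [π, Equiv.subtypeCongr, Equiv.trans_apply, h1, Equiv.sumCongr_apply,
        Sum.map_inr, Equiv.sumCompl_apply_inr]
      exact ⟨fun h => absurd h hc, fun h => absurd h (f ⟨c, hc⟩).2⟩
  refine ⟨π, fun c => if y' c = y (π.symm c) then false else true, ?_⟩
  funext c
  simp only [actPt]
  have hπc : y (π.symm c) = 2 ↔ y' c = 2 := by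
    have := hπ (π.symm c); rwa [Equiv.apply_symm_apply] at this
  simp only [cube, Fintype.mem_piFinset] at hy hy'
  have h1 := hy (π.symm c)
  have h2 := hy' c
  simp only [Finset.mem_insert, Finset.mem_singleton] at h1 h2
  by_cases he : y' c = y (π.symm c)
  · simp [if_pos he, he]
  · simp only [if_neg he, if_true]
    rcases h1 with ha | ha | ha
    · have h2' : y' c ≠ 2 := fun hh => by have := hπc.mpr hh; omega
      omega
    · have hb := hπc.mp ha
      omega
    · have h2' : y' c ≠ 2 := fun hh => by have := hπc.mpr hh; omega
      omega

lemma sphere_card (m i : ℕ) :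
    ((cube m).filter fun x => (Finset.univ.filter fun t => x t = (2 : ℤ)).card = i).card
      = m.choose i * 2 ^ (m - i) := by
  rcases le_or_gt i m with him | him
  · rw [Finset.card_eq_sum_card_fiberwise
      (f := fun x => Finset.univ.filter fun t => x t = (2 : ℤ))
      (t := Finset.powersetCard i Finset.univ)
      (fun x hx => by
        simp only [Finset.mem_coe, Finset.mem_filter] at hx
        exact Finset.mem_powersetCard.mpr ⟨Finset.filter_subset _ _ |>.trans (by simp), hx.2⟩)]
    have key : ∀ T ∈ Finset.powersetCard i (Finset.univ : Finset (Fin m)),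
        (((cube m).filter fun x => (Finset.univ.filter fun t => x t = (2 : ℤ)).card = i).filter
          (fun x => (Finset.univ.filter fun t => x t = (2 : ℤ)) = T)).card = 2 ^ (m - i) := by
      intro T hT
      obtain ⟨-, hTcard⟩ := Finset.mem_powersetCard.mp hT
      have heq : (((cube m).filter fun x =>
            (Finset.univ.filter fun t => x t = (2 : ℤ)).card = i).filter
          (fun x => (Finset.univ.filter fun t => x t = (2 : ℤ)) = T))
          = Fintype.piFinset (fun c => if c ∈ T then ({2} : Finset ℤ) else {1, 3}) := by
        ext x
        constructor
        · intro hx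
          rw [Finset.mem_filter, Finset.mem_filter] at hx
          obtain ⟨⟨hx1, hx2⟩, hxT⟩ := hx
          rw [Fintype.mem_piFinset]
          intro c
          have hmem : x c = 1 ∨ x c = 2 ∨ x c = 3 := by
            have := Fintype.mem_piFinset.mp hx1 c
            simpa using this
          by_cases hc : c ∈ T
          · have h2 : x c = 2 := by
              have : c ∈ Finset.univ.filter fun t => x t = (2 : ℤ) := hxT ▸ hc
              simpa using this
            simp [hc, h2]
          · have hne : x c ≠ 2 := by
              intro h2
              exact hc (hxT ▸ (by simpa using h2 : c ∈ Finset.univ.filter fun t => x t = (2:ℤ)))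
            rw [if_neg hc]
            simp only [Finset.mem_insert, Finset.mem_singleton]
            omega
        · intro hx
          rw [Fintype.mem_piFinset] at hx
          have hpt : ∀ c, (c ∈ T → x c = 2) ∧ (c ∉ T → (x c = 1 ∨ x c = 3)) := by
            intro c
            have := hx c
            by_cases hc : c ∈ T
            · rw [if_pos hc] at this
              simp only [Finset.mem_singleton] at this
              exact ⟨fun _ => this, fun h => absurd hc h⟩
            · rw [if_neg hc] at this
              simp only [Finset.mem_insert, Finset.mem_singleton] at this
              exact ⟨fun h => absurd h hc, fun _ => this⟩
          have hTeq : (Finset.univ.filter fun t => x t = (2 : ℤ)) = T := by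
            ext c
            simp only [Finset.mem_filter, Finset.mem_univ, true_and]
            constructor
            · intro h2
              by_contra hc
              rcases (hpt c).2 hc with h | h <;> omega
            · exact (hpt c).1
          rw [Finset.mem_filter, Finset.mem_filter]
          refine ⟨⟨?_, by rw [hTeq, hTcard]⟩, hTeq⟩
          rw [cube, Fintype.mem_piFinset]
          intro c
          simp only [Finset.mem_insert, Finset.mem_singleton]
          by_cases hc : c ∈ T
          · exact Or.inr (Or.inl ((hpt c).1 hc))
          · rcases (hpt c).2 hc with h | h
            · exact Or.inl h
            · exact Or.inr (Or.inr h)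
      rw [heq, Fintype.card_piFinset]
      rw [Finset.prod_congr rfl (fun c _ => by
        by_cases hc : c ∈ T <;> simp [hc] : ∀ c ∈ Finset.univ,
          (if c ∈ T then ({2} : Finset ℤ) else {1, 3}).card = if c ∈ T then 1 else 2)]
      rw [Finset.prod_ite]
      simp only [Finset.prod_const_one, Finset.prod_const, one_mul]
      congr 1
      have hcompl : Finset.univ.filter (fun c => ¬ c ∈ T) = Tᶜ := by
        ext c
        simp [Finset.mem_compl]
      rw [hcompl, Finset.card_compl, Fintype.card_fin, hTcard]
    rw [Finset.sum_congr rfl key, Finset.sum_const, Finset.card_powersetCard, smul_eq_mul]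
    simp
  · have hempty : ∀ x ∈ cube m,
        ¬ ((Finset.univ.filter fun t => x t = (2 : ℤ)).card = i) := by
      intro x _ hcard
      have hle := Finset.card_filter_le Finset.univ (fun t => x t = (2 : ℤ))
      simp only [Finset.card_univ, Fintype.card_fin] at hle
      omega
    rw [Finset.filter_false_of_mem hempty, Finset.card_empty,
      Nat.choose_eq_zero_of_lt him, zero_mul]

lemma card_filter_val_Ico {N : ℕ} (lo hi : ℕ) (h : hi ≤ N) (P : Fin N → Prop)
    [DecidablePred P] (hP : ∀ c : Fin N, P c ↔ lo ≤ c.val ∧ c.val < hi) :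
    (Finset.univ.filter P).card = hi - lo := by
  rw [← Nat.card_Ico lo hi]
  refine Finset.card_bij (fun c _ => c.val) ?_ ?_ ?_
  · intro c hc
    simp only [Finset.mem_filter, Finset.mem_univ, true_and] at hc
    simpa [Finset.mem_Ico] using (hP c).mp hc
  · intro c₁ _ c₂ _ hcc
    exact Fin.ext hcc
  · intro m hm
    simp only [Finset.mem_Ico] at hm
    exact ⟨⟨m, lt_of_lt_of_le hm.2 h⟩, by
      simp only [Finset.mem_filter, Finset.mem_univ, true_and]
      exact (hP _).mpr ⟨hm.1, hm.2⟩, rfl⟩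

lemma Emb_nonempty {q r : ℕ} (hq : 1 ≤ q) (hN : n * q + r ≤ N) :
    (Emb n N q r).Nonempty := by
  have hq0 : 0 < q := hq
  refine ⟨fun c => if h : (c : ℕ) < n * q then
      .inl (⟨(c : ℕ) / q, (Nat.div_lt_iff_lt_mul hq0).mpr h⟩, true)
    else if (c : ℕ) < n * q + r then .inr none else .inr (some true), ?_⟩
  simp only [Emb, Finset.mem_filter, Finset.mem_univ, true_and]
  constructor
  · intro j
    have hjq : (j : ℕ) * q + q ≤ n * q := by
      have h' : ((j : ℕ) + 1) * q ≤ n * q := Nat.mul_le_mul_right q j.isLt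
      rwa [add_one_mul] at h' 
    have := card_filter_val_Ico (N := N) ((j : ℕ) * q) ((j : ℕ) * q + q) (by omega)
      (fun c => idx (if h : (c : ℕ) < n * q then
        (.inl (⟨(c : ℕ) / q, (Nat.div_lt_iff_lt_mul hq0).mpr h⟩, true) : Code n)
      else if (c : ℕ) < n * q + r then .inr none else .inr (some true)) = some j) ?_
    · omega
    · intro c
      beta_reduce
      by_cases h : (c : ℕ) < n * q
      · rw [dif_pos h]
        simp only [idx, Option.some_inj]
        rw [Fin.ext_iff]
        simp only
        constructor
        · intro hdiv
          have h1 : (j : ℕ) * q ≤ (c : ℕ) := (Nat.le_div_iff_mul_le hq0).mp hdiv.ge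
          have h2 : (c : ℕ) < ((j : ℕ) + 1) * q :=
            (Nat.div_lt_iff_lt_mul hq0).mp (Nat.lt_succ_of_le hdiv.le)
          rw [add_one_mul] at h2
          omega
        · intro ⟨hlo, hhi⟩
          have h1 : (j : ℕ) ≤ (c : ℕ) / q := (Nat.le_div_iff_mul_le hq0).mpr hlo
          have h2 : (c : ℕ) / q < (j : ℕ) + 1 :=
            (Nat.div_lt_iff_lt_mul hq0).mpr (by rw [add_one_mul]; omega)
          exact Nat.le_antisymm (Nat.lt_succ_iff.mp h2) h1
      · rw [dif_neg h]
        constructor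
        · intro hidx
          by_cases h2 : (c : ℕ) < n * q + r <;> simp [h2, idx] at hidx
        · intro ⟨hlo, hhi⟩
          omega
  · have := card_filter_val_Ico (N := N) (n * q) (n * q + r) hN
      (fun c => (if h : (c : ℕ) < n * q then
        (.inl (⟨(c : ℕ) / q, (Nat.div_lt_iff_lt_mul hq0).mpr h⟩, true) : Code n)
      else if (c : ℕ) < n * q + r then .inr none else .inr (some true)) = .inr none) ?_
    · omega
    · intro c
      beta_reduce
      by_cases h : (c : ℕ) < n * q
      · rw [dif_pos h]
        simp only [reduceCtorEq, false_iff]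
        omega
      · rw [dif_neg h]
        by_cases h2 : (c : ℕ) < n * q + r
        · simp only [if_pos h2, true_iff]
          omega
        · simp only [if_neg h2]
          constructor
          · intro hx
            simp at hx
          · intro hx
            omega

def lineDir (a : Fin N → Code n) (d : Fin n → ℤ) : Fin N → ℤ := fun c =>
  match a c with
  | .inl (j, b) => if b then d j else - d j
  | .inr _ => 0

lemma emb_add (a : Fin N → Code n) (x d : Fin n → ℤ) :
    emb a (x + d) = emb a x + lineDir a d := by
  funext c
  simp only [emb, lineDir, Pi.add_apply]
  rcases hu : a c with ⟨j, b⟩ | (_ | b)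
  · cases b <;> simp [applyCode, hu] <;> ring
  · simp [applyCode, hu]
  · cases b <;> simp [applyCode, hu]

lemma moser_pullback {q r : ℕ} (hq : 1 ≤ q) {a : Fin N → Code n} (ha : a ∈ Emb n N q r)
    {A : Finset (Fin N → ℤ)} (hA : MoserFree A) :
    MoserFree ((cube n).filter fun x => emb a x ∈ A) := by
  rintro ⟨x, d, hd, hx, hxd, hxdd⟩
  simp only [Finset.mem_filter] at hx hxd hxdd
  apply hA
  refine ⟨emb a x, lineDir a d, ?_, hx.2, ?_, ?_⟩
  · obtain ⟨j, hj⟩ := Function.ne_iff.mp hd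
    simp only [Emb, Finset.mem_filter] at ha
    have hcard := ha.2.1 j
    have hpos : (Finset.univ.filter fun c => idx (a c) = some j).Nonempty := by
      rw [← Finset.card_pos, hcard]; omega
    obtain ⟨c, hc⟩ := hpos
    simp only [Finset.mem_filter, Finset.mem_univ, true_and] at hc
    intro hzero
    have := congrFun hzero c
    simp only [lineDir, Pi.zero_apply] at this
    rcases hu : a c with ⟨j', b⟩ | u
    · rw [hu] at this hc
      simp only [idx, Option.some_inj] at hc
      subst hc
      cases b <;> simp only [Bool.false_eq_true, if_false, if_true, neg_eq_zero] at this <;>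
        exact hj (by simpa using this)
    · rw [hu] at hc
      simp [idx] at hc
  · rw [← emb_add]; exact hxd.2
  · rw [← emb_add, ← emb_add]; exact hxdd.2

def Sph (n i : ℕ) : Finset (Fin n → ℤ) :=
  (cube n).filter fun x => (Finset.univ.filter fun t => x t = (2 : ℤ)).card = i

def Bset (n N q r : ℕ) (A : Finset (Fin N → ℤ)) (i : ℕ) :
    Finset ((Fin N → Code n) × (Fin n → ℤ)) :=
  ((Emb n N q r) ×ˢ (Sph n i)).filter fun p => emb p.1 p.2 ∈ A

def fib (n N q r i : ℕ) (y : Fin N → ℤ) : ℕ :=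
  (((Emb n N q r) ×ˢ (Sph n i)).filter fun p => emb p.1 p.2 = y).card

lemma fib_const {q r i : ℕ} {y y' : Fin N → ℤ} (hy : y ∈ cube N) (hy' : y' ∈ cube N)
    (hc : twosCard y = twosCard y') : fib n N q r i y = fib n N q r i y' := by
  obtain ⟨π, t, hπt⟩ := exists_actPt hy hy' hc
  unfold fib
  refine Finset.card_bij' (fun p _ => (act π t p.1, p.2))
    (fun p _ => (act π.symm (fun c => t (π c)) p.1, p.2)) ?_ ?_ ?_ ?_
  · intro p hp
    simp only [Finset.mem_filter, Finset.mem_product] at hp ⊢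
    obtain ⟨⟨h1, h2⟩, h3⟩ := hp
    refine ⟨⟨act_mem_Emb π t h1, h2⟩, ?_⟩
    rw [emb_act, h3, hπt]
  · intro p hp
    simp only [Finset.mem_filter, Finset.mem_product] at hp ⊢
    obtain ⟨⟨h1, h2⟩, h3⟩ := hp
    refine ⟨⟨act_mem_Emb _ _ h1, h2⟩, ?_⟩
    apply actPt_inj π t
    rw [← emb_act, act_act_symm, h3, hπt]
  · intro p _
    exact Prod.ext (act_symm_act π t p.1) rfl
  · intro p _
    exact Prod.ext (act_act_symm π t p.1) rfl

lemma Bset_card_left (q r i : ℕ) (A : Finset (Fin N → ℤ)) :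
    (Bset n N q r A i).card
      = ∑ a ∈ Emb n N q r, ((Sph n i).filter fun x => emb a x ∈ A).card := by
  rw [Finset.card_eq_sum_card_fiberwise (f := Prod.fst) (t := Emb n N q r)
    (fun p hp => by
      simp only [Finset.mem_coe, Bset, Finset.mem_filter, Finset.mem_product] at hp
      exact hp.1.1)]
  refine Finset.sum_congr rfl fun a ha => ?_
  refine Finset.card_bij' (fun p _ => p.2) (fun x _ => (a, x)) ?_ ?_ ?_ ?_
  · intro p hp
    simp only [Bset, Finset.mem_filter, Finset.mem_product] at hp ⊢
    obtain ⟨⟨⟨h1, h2⟩, h3⟩, h4⟩ := hp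
    rw [← h4]
    exact ⟨h2, h3⟩
  · intro x hx
    simp only [Bset, Finset.mem_filter, Finset.mem_product] at hx ⊢
    exact ⟨⟨⟨ha, hx.1⟩, hx.2⟩, by trivial⟩
  · intro p hp
    simp only [Bset, Finset.mem_filter, Finset.mem_product] at hp
    exact (Prod.ext hp.2.symm rfl)
  · intro x _
    rfl

lemma Bset_card_right (q r i : ℕ) (A : Finset (Fin N → ℤ)) :
    (Bset n N q r A i).card
      = ∑ y ∈ A.filter (fun y => twosCard y = q * i + r), fib n N q r i y := by
  rw [Finset.card_eq_sum_card_fiberwise (f := fun p => emb p.1 p.2)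
    (t := A.filter (fun y => twosCard y = q * i + r))
    (fun p hp => by
      simp only [Finset.mem_coe, Bset, Finset.mem_filter, Finset.mem_product, Sph] at hp
      obtain ⟨⟨h1, h2, h3⟩, h4⟩ := hp
      refine Finset.mem_filter.mpr ⟨h4, ?_⟩
      rw [twosCard_emb h1, show twosCard p.2 = i from h3])]
  refine Finset.sum_congr rfl fun y hy => ?_
  simp only [Finset.mem_filter] at hy
  unfold fib Bset
  congr 1
  rw [Finset.filter_filter]
  refine Finset.filter_congr fun p _ => ?_
  constructor
  · rintro ⟨-, h⟩; exact h
  · intro hp; exact ⟨hp ▸ hy.1, hp⟩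

lemma Bset_eq (q r i : ℕ) {A : Finset (Fin N → ℤ)} (hA : A ⊆ cube N)
    {y₀ : Fin N → ℤ} (hy₀ : y₀ ∈ cube N) (hk : twosCard y₀ = q * i + r) :
    (Bset n N q r A i).card
      = (A.filter (fun y => twosCard y = q * i + r)).card * fib n N q r i y₀ := by
  rw [Bset_card_right]
  have hcongr : ∀ y ∈ A.filter (fun y => twosCard y = q * i + r),
      fib n N q r i y = fib n N q r i y₀ := fun y hy => by
    simp only [Finset.mem_filter] at hy
    exact fib_const (hA hy.1) hy₀ (hy.2.trans hk.symm)
  rw [Finset.sum_congr rfl hcongr, Finset.sum_const, smul_eq_mul]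

lemma count (q r i : ℕ) {A : Finset (Fin N → ℤ)} (hA : A ⊆ cube N) :
    (Bset n N q r A i).card * (N.choose (q * i + r) * 2 ^ (N - (q * i + r)))
      = (Emb n N q r).card * (n.choose i * 2 ^ (n - i))
        * (A.filter (fun y => twosCard y = q * i + r)).card := by
  have hsph : ((cube N).filter fun y => twosCard y = q * i + r).card
      = N.choose (q * i + r) * 2 ^ (N - (q * i + r)) := sphere_card N (q * i + r)
  have hBcube : (Bset n N q r (cube N) i).card
      = (Emb n N q r).card * (n.choose i * 2 ^ (n - i)) := by
    rw [Bset_card_left]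
    have hcongr : ∀ a ∈ Emb n N q r,
        ((Sph n i).filter fun x => emb a x ∈ cube N).card = n.choose i * 2 ^ (n - i) :=
      fun a _ => by
        have hmem : ∀ x ∈ Sph n i, emb a x ∈ cube N :=
          fun x hx => emb_mem_cube (Finset.mem_filter.mp hx).1
        rw [Finset.filter_true_of_mem hmem]
        exact sphere_card n i
    rw [Finset.sum_congr rfl hcongr, Finset.sum_const, smul_eq_mul]
  rcases Finset.eq_empty_or_nonempty (A.filter (fun y => twosCard y = q * i + r)) with he | hne
  · rw [Bset_card_right, he]
    simp
  · obtain ⟨y₀, hy₀⟩ := hne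
    have hy₀' := Finset.mem_filter.mp hy₀
    have hy₀c : y₀ ∈ cube N := hA hy₀'.1
    have e1 := Bset_eq (n := n) q r i hA hy₀c hy₀'.2
    have e2 := Bset_eq (n := n) q r i (Finset.Subset.refl (cube N)) hy₀c hy₀'.2
    rw [e1, ← hsph, ← hBcube, e2]
    ring

lemma density_sum (q r i : ℕ) (hi : i ≤ n) (hk : q * i + r ≤ N)
    {A : Finset (Fin N → ℤ)} (hA : A ⊆ cube N) :
    ∑ a ∈ Emb n N q r, density n ((cube n).filter fun x => emb a x ∈ A) i
      = ((Emb n N q r).card : ℝ) * density N A (q * i + r) := by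
  have hswap : ∀ a : Fin N → Code n,
      (((cube n).filter fun x => emb a x ∈ A).filter
        fun x => (Finset.univ.filter fun t => x t = (2 : ℤ)).card = i)
      = (Sph n i).filter (fun x => emb a x ∈ A) := by
    intro a
    unfold Sph
    rw [Finset.filter_filter, Finset.filter_filter]
    exact Finset.filter_congr fun x _ => and_comm
  have hD1 : (0 : ℝ) < (n.choose i : ℝ) * 2 ^ (n - i) := by
    have : (0 : ℝ) < (n.choose i : ℝ) := by exact_mod_cast Nat.choose_pos hi
    positivity
  have hD2 : (0 : ℝ) < (N.choose (q * i + r) : ℝ) * 2 ^ (N - (q * i + r)) := by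
    have : (0 : ℝ) < (N.choose (q * i + r) : ℝ) := by exact_mod_cast Nat.choose_pos hk
    positivity
  have hcount := count (n := n) q r i hA
  unfold density
  rw [Finset.sum_congr rfl (fun a _ => by rw [hswap a])]
  rw [← Finset.sum_div]
  have hnum : (A.filter fun x => (Finset.univ.filter fun t => x t = (2 : ℤ)).card = q * i + r)
      = (A.filter fun y => twosCard y = q * i + r) := rfl
  rw [hnum, ← mul_div_assoc, div_eq_div_iff (ne_of_gt hD1) (ne_of_gt hD2)]
  rw [← Nat.cast_sum, ← Bset_card_left]
  have hnat : (Bset n N q r A i).card * (N.choose (q * i + r) * 2 ^ (N - (q * i + r)))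
      = (Emb n N q r).card * (A.filter fun y => twosCard y = q * i + r).card
        * (n.choose i * 2 ^ (n - i)) := by
    rw [hcount]; ring
  exact_mod_cast hnat

end Propg

/-- Propagation lemma: a linear inequality `∑ vᵢ·αᵢ(A) ≤ s` valid for all Moser sets in
`[3]^n` propagates, for any `q ≥ 1`, `r ≥ 0` and `N ≥ nq + r`, to the inequality
`∑ vᵢ·α_{qi+r}(A) ≤ s` for all Moser sets `A ⊆ [3]^N`. -/
theorem propagation (n : ℕ) (v : Fin (n + 1) → ℝ) (s : ℝ)
    (h : ∀ A : Finset (Fin n → ℤ), A ⊆ cube n → MoserFree A →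
      ∑ i : Fin (n + 1), v i * density n A i ≤ s) :
    ∀ q r N : ℕ, 1 ≤ q → n * q + r ≤ N →
      ∀ A : Finset (Fin N → ℤ), A ⊆ cube N → MoserFree A →
        ∑ i : Fin (n + 1), v i * density N A (q * i + r) ≤ s := by
  intro q r N hq hN A hA hMA
  have hM : 0 < (Propg.Emb n N q r).card :=
    Finset.card_pos.mpr (Propg.Emb_nonempty hq hN)
  set M := (Propg.Emb n N q r).card with hMdef
  have hM' : (0 : ℝ) < (M : ℝ) := by exact_mod_cast hM
  have key : ∀ i : Fin (n + 1),
      ∑ a ∈ Propg.Emb n N q r, density n ((cube n).filter fun x => Propg.emb a x ∈ A) i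
        = (M : ℝ) * density N A (q * i + r) := by
    intro i
    have hi : (i : ℕ) ≤ n := Nat.lt_succ_iff.mp i.isLt
    have hk : q * (i : ℕ) + r ≤ N := by
      have h1 : q * (i : ℕ) ≤ q * n := Nat.mul_le_mul_left q hi
      have h2 : q * n = n * q := mul_comm q n
      omega
    exact Propg.density_sum q r i hi hk hA
  have hbound : ∀ a ∈ Propg.Emb n N q r,
      ∑ i : Fin (n + 1), v i * density n ((cube n).filter fun x => Propg.emb a x ∈ A) i ≤ s :=
    fun a ha => h _ (Finset.filter_subset _ _) (Propg.moser_pullback hq ha hMA)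
  calc ∑ i : Fin (n + 1), v i * density N A (q * i + r)
      = (M : ℝ)⁻¹ * ∑ i : Fin (n + 1), v i * ((M : ℝ) * density N A (q * i + r)) := by
        rw [Finset.mul_sum]
        refine Finset.sum_congr rfl fun i _ => ?_
        field_simp
    _ = (M : ℝ)⁻¹ * ∑ i : Fin (n + 1), v i *
          ∑ a ∈ Propg.Emb n N q r,
            density n ((cube n).filter fun x => Propg.emb a x ∈ A) i := by
        congr 1
        exact Finset.sum_congr rfl fun i _ => by rw [key i]
    _ = (M : ℝ)⁻¹ * ∑ a ∈ Propg.Emb n N q r, ∑ i : Fin (n + 1),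
          v i * density n ((cube n).filter fun x => Propg.emb a x ∈ A) i := by
        congr 1
        simp_rw [Finset.mul_sum]
        exact Finset.sum_comm
    _ ≤ (M : ℝ)⁻¹ * ∑ _a ∈ Propg.Emb n N q r, s := by
        apply mul_le_mul_of_nonneg_left _ (by positivity)
        exact Finset.sum_le_sum hbound
    _ = s := by
        rw [Finset.sum_const, nsmul_eq_mul]
        field_simp
        rfl
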